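/- Let T be a (possibly DAG-structured) binary static attack tree over leaves B, (V, ▽, ▵) a semiring attribute domain which is both idempotent (x ▽ x = x and x ▵ x = x) and absorbing (x ▽ (x ▵ y) = x), and α : B → V. Define BU(v) bottom-up by BU(a) = α(a), BU(OR(v₁,v₂)) = BU(v₁) ▽ BU(v₂), BU(AND(v₁,v₂)) = BU(v₁) ▵ BU(v₂). Let Suc(v) = {A ⊆ B | f(v,A) = ⊤} be the set of successful attacks on v. Then BU(v) = ▽_{A ∈ Suc(v)} ▵_{a ∈ A} α(a) for every node v. -/

import Mathlib

open scoped Classical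

/-- Binary static attack trees over basic attack steps `B` (possibly
DAG-structured: subtrees and leaves may be shared). -/
inductive SAT (B : Type*) where
  | bas : B → SAT B
  | or : SAT B → SAT B → SAT B
  | and : SAT B → SAT B → SAT B

/-- The structure function: `reaches t A` iff attack `A` reaches node `t`. -/
def reaches {B : Type*} : SAT B → Finset B → Prop
  | .bas b, A => b ∈ A
  | .or l r, A => reaches l A ∨ reaches r A
  | .and l r, A => reaches l A ∧ reaches r A

/-- The set `Suc(t)` of successful attacks on `t`. -/
noncomputable def suc {B : Type*} [Fintype B] (t : SAT B) : Finset (Finset B) :=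
  Finset.univ.filter (fun A => reaches t A)

/-- Lift a binary operation to `Option`, with `none` acting as identity. -/
def lift {V : Type*} (op : V → V → V) : Option V → Option V → Option V
  | some x, some y => some (op x y)
  | some x, none => some x
  | none, y => y

/-- Iterate a commutative associative operation over a finite index set
(yielding `none` on the empty set). -/
noncomputable def bigOp {ι V : Type*} (op : V → V → V) (s : Finset ι)
    (f : ι → Option V) : Option V :=
  (s.toList.map f).foldr (lift op) none

/-- The bottom-up evaluation `BU`. -/
def bu {B V : Type*} (orOp andOp : V → V → V) (α : B → V) : SAT B → V
  | .bas a => α a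
  | .or l r => orOp (bu orOp andOp α l) (bu orOp andOp α r)
  | .and l r => andOp (bu orOp andOp α l) (bu orOp andOp α r)

section Aux

variable {ι V : Type*} (op : V → V → V)

theorem lift_none_right (x : Option V) : lift op x none = x := by cases x <;> rfl

theorem lift_comm (hc : ∀ x y, op x y = op y x) :
    ∀ x y : Option V, lift op x y = lift op y x := by
  rintro (_|x) (_|y) <;> simp [lift, hc]

theorem lift_assoc (ha : ∀ x y z, op (op x y) z = op x (op y z)) :
    ∀ x y z : Option V, lift op (lift op x y) z = lift op x (lift op y z) := by
  rintro (_|x) (_|y) (_|z) <;> simp [lift, ha]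

theorem lift_idem (hi : ∀ x, op x x = x) : ∀ x : Option V, lift op x x = x := by
  rintro (_|x) <;> simp [lift, hi]

theorem bigOp_eq_fold (hc : ∀ x y, op x y = op y x)
    (ha : ∀ x y z, op (op x y) z = op x (op y z)) (s : Finset ι) (f : ι → Option V) :
    bigOp op s f =
      @Finset.fold ι (Option V) (lift op) ⟨lift_comm op hc⟩ ⟨lift_assoc op ha⟩ none f s := by
  rw [bigOp, Finset.fold, ← Finset.coe_toList s, Multiset.map_coe, Multiset.coe_fold_r]

variable (hc : ∀ x y, op x y = op y x) (ha : ∀ x y z, op (op x y) z = op x (op y z))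

include hc ha

theorem bigOp_empty (f : ι → Option V) : bigOp op (∅ : Finset ι) f = none := by
  rw [bigOp_eq_fold op hc ha]
  rfl

theorem bigOp_singleton (a : ι) (f : ι → Option V) : bigOp op ({a} : Finset ι) f = f a := by
  haveI : Std.Commutative (lift op) := ⟨lift_comm op hc⟩
  haveI : Std.Associative (lift op) := ⟨lift_assoc op ha⟩
  rw [bigOp_eq_fold op hc ha, Finset.fold_singleton, lift_none_right]

theorem bigOp_insert [DecidableEq ι] {a : ι} {s : Finset ι} (h : a ∉ s) (f : ι → Option V) :
    bigOp op (insert a s) f = lift op (f a) (bigOp op s f) := by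
  haveI : Std.Commutative (lift op) := ⟨lift_comm op hc⟩
  haveI : Std.Associative (lift op) := ⟨lift_assoc op ha⟩
  rw [bigOp_eq_fold op hc ha, bigOp_eq_fold op hc ha, Finset.fold_insert h]

theorem bigOp_insert_idem [DecidableEq ι] (hi : ∀ x, op x x = x) (a : ι) (s : Finset ι)
    (f : ι → Option V) :
    bigOp op (insert a s) f = lift op (f a) (bigOp op s f) := by
  haveI : Std.Commutative (lift op) := ⟨lift_comm op hc⟩
  haveI : Std.Associative (lift op) := ⟨lift_assoc op ha⟩
  haveI : Std.IdempotentOp (lift op) := ⟨lift_idem op hi⟩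
  rw [bigOp_eq_fold op hc ha, bigOp_eq_fold op hc ha, Finset.fold_insert_idem]

theorem bigOp_absorb_mem [DecidableEq ι] (hi : ∀ x, op x x = x) {a : ι} {s : Finset ι}
    (h : a ∈ s) (f : ι → Option V) :
    bigOp op s f = lift op (f a) (bigOp op s f) := by
  conv_lhs => rw [← Finset.insert_eq_self.mpr h]
  rw [bigOp_insert_idem op hc ha hi]

theorem bigOp_union [DecidableEq ι] (hi : ∀ x, op x x = x) (s t : Finset ι)
    (f : ι → Option V) :
    bigOp op (s ∪ t) f = lift op (bigOp op s f) (bigOp op t f) := by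
  induction s using Finset.induction_on with
  | empty =>
    rw [Finset.empty_union, bigOp_empty op hc ha]
    rfl
  | @insert a s hnotmem ih =>
    rw [Finset.insert_union, bigOp_insert_idem op hc ha hi, bigOp_insert op hc ha hnotmem, ih,
      lift_assoc op ha]

theorem bigOp_congr {s : Finset ι} {f g : ι → Option V} (h : ∀ a ∈ s, f a = g a) :
    bigOp op s f = bigOp op s g := by
  haveI : Std.Commutative (lift op) := ⟨lift_comm op hc⟩
  haveI : Std.Associative (lift op) := ⟨lift_assoc op ha⟩
  rw [bigOp_eq_fold op hc ha, bigOp_eq_fold op hc ha]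
  exact Finset.fold_congr h

theorem bigOp_isSome (hi : ∀ x, op x x = x) {a : ι} {s : Finset ι} {f : ι → Option V}
    (h : a ∈ s) (hs : (f a).isSome) : (bigOp op s f).isSome := by
  classical
  rw [bigOp_absorb_mem op hc ha hi h]
  obtain ⟨w, hw⟩ := Option.isSome_iff_exists.mp hs
  rw [hw]
  cases bigOp op s f <;> simp [lift]

theorem bigOp_absorbed {X : Option V} {s : Finset ι} {f : ι → Option V}
    (h : ∀ a ∈ s, lift op X (f a) = X) : lift op X (bigOp op s f) = X := by
  classical
  induction s using Finset.induction_on with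
  | empty => rw [bigOp_empty op hc ha, lift_none_right]
  | @insert a s hnotmem ih =>
    rw [bigOp_insert op hc ha hnotmem, ← lift_assoc op ha,
      h a (Finset.mem_insert_self a s)]
    exact ih fun b hb => h b (Finset.mem_insert_of_mem hb)

end Aux

section Dist

variable {ι V : Type*} {orOp andOp : V → V → V}
  (horc : ∀ x y, orOp x y = orOp y x)
  (hora : ∀ x y z, orOp (orOp x y) z = orOp x (orOp y z))
  (hio : ∀ x, orOp x x = x)
  (hdist : ∀ x y z, andOp x (orOp y z) = orOp (andOp x y) (andOp x z))

include horc hora hio hdist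

theorem bigOp_distrib (x : V) {s : Finset ι} {f : ι → Option V} :
    s.Nonempty → (∀ a ∈ s, (f a).isSome) →
    lift andOp (some x) (bigOp orOp s f) =
      bigOp orOp s (fun a => lift andOp (some x) (f a)) := by
  classical
  induction s using Finset.induction_on with
  | empty => intro hs _; exact absurd hs (by simp)
  | @insert a s hnotmem ih =>
    intro _ hf
    obtain ⟨w, hw⟩ := Option.isSome_iff_exists.mp (hf a (Finset.mem_insert_self a s))
    rcases s.eq_empty_or_nonempty with rfl | hsne
    · rw [bigOp_insert orOp horc hora hnotmem, bigOp_insert orOp horc hora hnotmem,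
        bigOp_empty orOp horc hora, lift_none_right, bigOp_empty orOp horc hora,
        lift_none_right]
    · obtain ⟨b, hb⟩ := hsne
      have hbig : (bigOp orOp s f).isSome :=
        bigOp_isSome orOp horc hora hio hb (hf b (Finset.mem_insert_of_mem hb))
      obtain ⟨m, hm⟩ := Option.isSome_iff_exists.mp hbig
      rw [bigOp_insert orOp horc hora hnotmem, bigOp_insert orOp horc hora hnotmem,
        ← ih ⟨b, hb⟩ (fun c hc => hf c (Finset.mem_insert_of_mem hc)), hw, hm]
      show some (andOp x (orOp w m)) = some (orOp (andOp x w) (andOp x m))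
      rw [hdist]

end Dist

section SucFacts

variable {B : Type*} [Fintype B]

theorem reaches_mono (t : SAT B) {A A' : Finset B} (h : A ⊆ A') :
    reaches t A → reaches t A' := by
  induction t with
  | bas b => exact fun hb => h hb
  | or l r ihl ihr =>
    intro hr
    rcases hr with h1 | h2
    · exact Or.inl (ihl h1)
    · exact Or.inr (ihr h2)
  | and l r ihl ihr =>
    intro hr
    exact ⟨ihl hr.1, ihr hr.2⟩

theorem not_reaches_empty (t : SAT B) : ¬ reaches t (∅ : Finset B) := by
  induction t with
  | bas b => simp [reaches]
  | or l r ihl ihr => rintro (h | h); exacts [ihl h, ihr h]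
  | and l r ihl ihr => rintro ⟨h, _⟩; exact ihl h

theorem mem_suc_iff {t : SAT B} {A : Finset B} : A ∈ suc t ↔ reaches t A := by
  simp [suc]

theorem suc_or (l r : SAT B) : suc (SAT.or l r) = suc l ∪ suc r := by
  ext A
  rw [mem_suc_iff, Finset.mem_union, mem_suc_iff, mem_suc_iff]; rfl

theorem suc_and (l r : SAT B) : suc (SAT.and l r) = suc l ∩ suc r := by
  ext A
  rw [mem_suc_iff, Finset.mem_inter, mem_suc_iff, mem_suc_iff]; rfl

theorem mem_suc_nonempty {t : SAT B} {A : Finset B} (h : A ∈ suc t) : A.Nonempty := by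
  rw [Finset.nonempty_iff_ne_empty]
  rintro rfl
  exact not_reaches_empty t (mem_suc_iff.mp h)

end SucFacts

/-- For a (possibly DAG-structured) binary static attack tree
and an idempotent, absorbing semiring attribute domain `(V, ▽, ▵)`, the
bottom-up value at every node `v` equals `▽_{A ∈ Suc(v)} ▵_{a ∈ A} α a`. -/
theorem bu_eq_suc_metric {B V : Type*} [Fintype B]
    (orOp andOp : V → V → V) (α : B → V)
    (horc : ∀ x y, orOp x y = orOp y x)
    (hora : ∀ x y z, orOp (orOp x y) z = orOp x (orOp y z))
    (handc : ∀ x y, andOp x y = andOp y x)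
    (handa : ∀ x y z, andOp (andOp x y) z = andOp x (andOp y z))
    (hdist : ∀ x y z, andOp x (orOp y z) = orOp (andOp x y) (andOp x z))
    (hidem_or : ∀ x, orOp x x = x)
    (hidem_and : ∀ x, andOp x x = x)
    (habs : ∀ x y, orOp x (andOp x y) = x)
    (hne : ∀ v : SAT B, (suc v).Nonempty) :
    ∀ v : SAT B,
      some (bu orOp andOp α v) =
        bigOp orOp (suc v) (fun A => bigOp andOp A (fun a => some (α a))) := by
  classical
  set g : Finset B → Option V := fun A => bigOp andOp A (fun a => some (α a)) with hg
  have hgsome : ∀ {A : Finset B}, A.Nonempty → (g A).isSome := by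
    rintro A ⟨a, ha⟩
    exact bigOp_isSome andOp handc handa hidem_and ha rfl
  intro v
  induction v with
  | bas b =>
    have hbmem : ({b} : Finset B) ∈ suc (SAT.bas b) := by
      rw [mem_suc_iff]; exact Finset.mem_singleton_self b
    have habs_each : ∀ A ∈ suc (SAT.bas b), lift orOp (some (α b)) (g A) = some (α b) := by
      intro A hA
      have hbA : b ∈ A := mem_suc_iff.mp hA
      have hA' : g A = lift andOp (some (α b)) (bigOp andOp (A.erase b) (fun a => some (α a))) := by
        simp only [hg]
        conv_lhs => rw [← Finset.insert_erase hbA]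
        rw [bigOp_insert andOp handc handa (Finset.notMem_erase b A)]
      rw [hA']
      cases h : bigOp andOp (A.erase b) (fun a => some (α a)) with
      | none =>
        show some (orOp (α b) (α b)) = some (α b)
        rw [hidem_or]
      | some z =>
        show some (orOp (α b) (andOp (α b) z)) = some (α b)
        rw [habs]
    have h1 : bigOp orOp (suc (SAT.bas b)) g =
        lift orOp (g {b}) (bigOp orOp (suc (SAT.bas b)) g) :=
      bigOp_absorb_mem orOp horc hora hidem_or hbmem g
    have h2 : g ({b} : Finset B) = some (α b) := by
      rw [hg]; exact bigOp_singleton andOp handc handa b _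
    show some (α b) = bigOp orOp (suc (SAT.bas b)) g
    rw [h1, h2, bigOp_absorbed orOp horc hora habs_each]
  | or l r ihl ihr =>
    show some (orOp (bu orOp andOp α l) (bu orOp andOp α r)) = _
    rw [suc_or, bigOp_union orOp horc hora hidem_or, ← ihl, ← ihr]
    rfl
  | and l r ihl ihr =>
    have hslne := hne l
    have hsrne := hne r
    have hgl : ∀ A ∈ suc l, (g A).isSome := fun A hA => hgsome (mem_suc_nonempty hA)
    have hgr : ∀ A ∈ suc r, (g A).isSome := fun A hA => hgsome (mem_suc_nonempty hA)
    set N : Option V :=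
      bigOp orOp (suc l) (fun A => bigOp orOp (suc r) (fun A' => g (A ∪ A'))) with hN
    -- Step 1: distribute
    have step1 : lift andOp (bigOp orOp (suc l) g) (bigOp orOp (suc r) g) = N := by
      rw [← ihr, lift_comm andOp handc,
        bigOp_distrib horc hora hidem_or hdist _ hslne hgl, hN]
      refine bigOp_congr orOp horc hora (fun A hA => ?_)
      obtain ⟨w, hw⟩ := Option.isSome_iff_exists.mp (hgsome (mem_suc_nonempty hA))
      rw [lift_comm andOp handc, ihr, hw,
        bigOp_distrib horc hora hidem_or hdist _ hsrne hgr]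
      refine bigOp_congr orOp horc hora (fun A' hA' => ?_)
      rw [← hw, hg]
      exact (bigOp_union andOp handc handa hidem_and A A' _).symm
    -- Step 2: absorption
    have humem : ∀ {A A' : Finset B}, A ∈ suc l → A' ∈ suc r →
        A ∪ A' ∈ suc (SAT.and l r) := by
      intro A A' hA hA'
      rw [mem_suc_iff]
      exact ⟨reaches_mono l Finset.subset_union_left (mem_suc_iff.mp hA),
        reaches_mono r Finset.subset_union_right (mem_suc_iff.mp hA')⟩
    set M : Option V := bigOp orOp (suc (SAT.and l r)) g with hM
    have hC1 : lift orOp M N = M := by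
      refine bigOp_absorbed orOp horc hora (fun A hA => ?_)
      refine bigOp_absorbed orOp horc hora (fun A' hA' => ?_)
      rw [lift_comm orOp horc]
      exact (bigOp_absorb_mem orOp horc hora hidem_or (humem hA hA') g).symm
    have hC2 : lift orOp N M = N := by
      refine bigOp_absorbed orOp horc hora (fun C hC => ?_)
      have hCl : C ∈ suc l := by
        rw [suc_and] at hC; exact (Finset.mem_inter.mp hC).1
      have hCr : C ∈ suc r := by
        rw [suc_and] at hC; exact (Finset.mem_inter.mp hC).2
      have h1 : N = lift orOp (bigOp orOp (suc r) (fun A' => g (C ∪ A'))) N :=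
        bigOp_absorb_mem orOp horc hora hidem_or hCl _
      have h2 : bigOp orOp (suc r) (fun A' => g (C ∪ A')) =
          lift orOp (g (C ∪ C)) (bigOp orOp (suc r) (fun A' => g (C ∪ A'))) :=
        bigOp_absorb_mem orOp horc hora hidem_or hCr _
      rw [Finset.union_self] at h2
      have hNeq : N = lift orOp (g C) N := by
        conv_lhs => rw [h1, h2]
        rw [lift_assoc orOp hora, ← h1]
      rw [lift_comm orOp horc, ← hNeq]
    have step2 : N = M := by
      conv_rhs => rw [← hC1]
      rw [lift_comm orOp horc, hC2]
    show some (andOp (bu orOp andOp α l) (bu orOp andOp α r)) = M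
    have : some (andOp (bu orOp andOp α l) (bu orOp andOp α r)) =
        lift andOp (some (bu orOp andOp α l)) (some (bu orOp andOp α r)) := rfl
    rw [this, ihl, ihr, step1, step2]
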